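/- arXiv:1304.4482 — 5 statements merged into one kernel-verified Lean document; each statement's English description precedes it below -/
import Mathlib

section
/- Let I_1 < I_2 < ... < I_k be disjoint ordered open intervals in R and w_j positive integrable weight functions on I_j with all moments finite. Then the bilinear form on symmetric polynomials in k variables given by <f,g> = integral over I_1 x ... x I_k of f(x)g(x) prod_{i<i'}(x_{i'}-x_i) prod_j w_j(x_j) dx is positive definite. -/
open MeasureTheory

/-- A multivariate real polynomial vanishing on a product of infinite sets is zero. -/
lemma mv_vanish : ∀ (n : ℕ) (s : Fin n → Set ℝ), (∀ i, (s i).Infinite) →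
    ∀ (f : MvPolynomial (Fin n) ℝ),
    (∀ x ∈ Set.univ.pi s, MvPolynomial.eval x f = 0) → f = 0 := by
  intro n
  induction n with
  | zero =>
    intro s hs f h
    apply MvPolynomial.funext (q := 0)
    intro x
    simpa using h x (by intro i _; exact i.elim0)
  | succ n ih =>
    intro s hs f h
    have hinj : Function.Injective (MvPolynomial.finSuccEquiv ℝ n) :=
      (MvPolynomial.finSuccEquiv ℝ n).injective
    apply hinj
    rw [map_zero]
    ext i m
    rw [Polynomial.coeff_zero, MvPolynomial.coeff_zero]
    have key : (MvPolynomial.finSuccEquiv ℝ n f).coeff i = 0 := by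
      apply ih (fun j => s j.succ) (fun j => hs j.succ)
      intro y hy
      have hmap : Polynomial.map (MvPolynomial.eval y)
          (MvPolynomial.finSuccEquiv ℝ n f) = 0 := by
        apply Polynomial.eq_zero_of_infinite_isRoot
        apply Set.Infinite.mono ?_ (hs 0)
        intro t ht
        show Polynomial.IsRoot _ t
        unfold Polynomial.IsRoot
        rw [← MvPolynomial.eval_eq_eval_mv_eval']
        apply h
        intro j _
        refine Fin.cases ?_ ?_ j
        · simpa using ht
        · intro j'
          simpa using hy j' (Set.mem_univ _)
      have := congrArg (fun p => Polynomial.coeff p i) hmap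
      simpa [Polynomial.coeff_map] using this
    rw [key, MvPolynomial.coeff_zero]

theorem stmt2 (k : ℕ) (a b : Fin k → ℝ) (hab : ∀ j, a j < b j)
    (hord : ∀ i i' : Fin k, i < i' → b i ≤ a i')
    (w : Fin k → ℝ → ℝ)
    (hwpos : ∀ j, ∀ x ∈ Set.Ioo (a j) (b j), 0 < w j x)
    (hwint : ∀ (j : Fin k) (m : ℕ),
      IntegrableOn (fun x => |x| ^ m * w j x) (Set.Ioo (a j) (b j)) volume)
    (f : MvPolynomial (Fin k) ℝ) (hf : f.IsSymmetric) (hf0 : f ≠ 0) :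
    0 < ∫ x : Fin k → ℝ in Set.univ.pi (fun j => Set.Ioo (a j) (b j)),
        (MvPolynomial.eval x f) ^ 2 *
          (∏ p ∈ Finset.univ.filter (fun p : Fin k × Fin k => p.1 < p.2),
            (x p.2 - x p.1)) *
          ∏ j, w j (x j) := by
  set s : Fin k → Set ℝ := fun j => Set.Ioo (a j) (b j) with hs
  set S : Set (Fin k → ℝ) := Set.univ.pi s with hS
  set g : (Fin k → ℝ) → ℝ := fun x =>
    (MvPolynomial.eval x f) ^ 2 *
      (∏ p ∈ Finset.univ.filter (fun p : Fin k × Fin k => p.1 < p.2),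
        (x p.2 - x p.1)) * ∏ j, w j (x j) with hg
  -- one-dimensional integrability of x^d * w j x
  have hWj : ∀ (j : Fin k) (d : ℕ),
      IntegrableOn (fun x => x ^ d * w j x) (s j) volume := by
    intro j d
    have h0 : IntegrableOn (w j) (s j) volume := by
      have := hwint j 0
      simpa using this
    apply Integrable.mono' (hwint j d)
    · exact (continuous_pow d).aestronglyMeasurable.mul h0.aestronglyMeasurable
    · refine (ae_restrict_iff' measurableSet_Ioo).2 (Filter.Eventually.of_forall ?_)
      intro x hx
      have hw := hwpos j x hx
      rw [Real.norm_eq_abs, abs_mul, abs_pow, abs_of_pos hw]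
  -- integrability of each monomial times weights over the box
  have hmono : ∀ d : Fin k →₀ ℕ,
      IntegrableOn (fun x : Fin k → ℝ => ∏ j, (x j ^ d j * w j (x j))) S volume := by
    intro d
    set F : Fin k → ℝ → ℝ := fun j x => x ^ d j * w j x with hF
    set G : Fin k → ℝ → ℝ := fun j => (s j).indicator (F j) with hG
    have hGint : ∀ j, Integrable (G j) volume := fun j =>
      (integrable_indicator_iff measurableSet_Ioo).2 (hWj j (d j))
    have hprod : Integrable (fun x : Fin k → ℝ => ∏ j, G j (x j)) volume :=
      Integrable.fintype_prod hGint
    have heq : (fun x : Fin k → ℝ => ∏ j, G j (x j)) =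
        S.indicator (fun x => ∏ j, F j (x j)) := by
      funext x
      by_cases hx : x ∈ S
      · rw [Set.indicator_of_mem hx]
        apply Finset.prod_congr rfl
        intro j _
        exact Set.indicator_of_mem (hx j (Set.mem_univ j)) _
      · rw [Set.indicator_of_notMem hx]
        obtain ⟨j, hj⟩ := not_forall.mp (by simpa [hS, Set.mem_univ_pi] using hx)
        refine Finset.prod_eq_zero (Finset.mem_univ j) ?_
        exact Set.indicator_of_notMem hj _
    rw [heq] at hprod
    have hSm : MeasurableSet S :=
      MeasurableSet.univ_pi (fun j => measurableSet_Ioo)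
    exact (integrable_indicator_iff hSm).1 hprod
  -- polynomial P whose evaluation is f^2 * Vandermonde
  set P : MvPolynomial (Fin k) ℝ := f ^ 2 *
    ∏ p ∈ Finset.univ.filter (fun p : Fin k × Fin k => p.1 < p.2),
      (MvPolynomial.X p.2 - MvPolynomial.X p.1) with hP
  have hevalP : ∀ x : Fin k → ℝ, MvPolynomial.eval x P =
      (MvPolynomial.eval x f) ^ 2 *
        ∏ p ∈ Finset.univ.filter (fun p : Fin k × Fin k => p.1 < p.2),
          (x p.2 - x p.1) := by
    intro x
    simp [hP]
  have hgexp : ∀ x : Fin k → ℝ, g x =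
      ∑ d ∈ P.support, P.coeff d * ∏ j, (x j ^ d j * w j (x j)) := by
    intro x
    rw [hg]
    simp only
    rw [← hevalP x, MvPolynomial.eval_eq, Finset.sum_mul]
    apply Finset.sum_congr rfl
    intro d _
    have hps : ∏ i ∈ d.support, x i ^ d i = ∏ j, x j ^ d j :=
      Finset.prod_subset (Finset.subset_univ _)
        (fun j _ hj => by simp [Finsupp.notMem_support_iff.mp hj])
    rw [hps, mul_assoc, ← Finset.prod_mul_distrib]
  have hgint : IntegrableOn g S volume := by
    have : IntegrableOn (fun x : Fin k → ℝ =>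
        ∑ d ∈ P.support, P.coeff d * ∏ j, (x j ^ d j * w j (x j))) S volume := by
      apply integrable_finset_sum
      intro d _
      exact (hmono d).const_mul _
    exact this.congr_fun (fun x _ => (hgexp x).symm) (MeasurableSet.univ_pi
      (fun j => measurableSet_Ioo))
  -- positivity of the Vandermonde and weights on the box
  have hvand : ∀ x ∈ S, 0 < ∏ p ∈ Finset.univ.filter
      (fun p : Fin k × Fin k => p.1 < p.2), (x p.2 - x p.1) := by
    intro x hx
    apply Finset.prod_pos
    intro p hp
    have hlt : p.1 < p.2 := (Finset.mem_filter.mp hp).2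
    have h1 : x p.1 < b p.1 := (hx p.1 (Set.mem_univ _)).2
    have h2 : a p.2 < x p.2 := (hx p.2 (Set.mem_univ _)).1
    have := hord p.1 p.2 hlt
    linarith
  have hwprod : ∀ x ∈ S, 0 < ∏ j, w j (x j) := by
    intro x hx
    exact Finset.prod_pos fun j _ => hwpos j (x j) (hx j (Set.mem_univ j))
  have hnonneg : 0 ≤ᵐ[volume.restrict S] g := by
    refine (ae_restrict_iff' (MeasurableSet.univ_pi (fun j => measurableSet_Ioo))).2
      (Filter.Eventually.of_forall ?_)
    intro x hx
    exact mul_nonneg (mul_nonneg (sq_nonneg _) (hvand x hx).le) (hwprod x hx).le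
  -- the support has positive measure
  have hx0 : ∃ x ∈ S, MvPolynomial.eval x f ≠ 0 := by
    by_contra hcon
    push_neg at hcon
    exact hf0 (mv_vanish k s (fun i => Set.Ioo_infinite (hab i)) f hcon)
  obtain ⟨x₀, hx₀S, hx₀⟩ := hx0
  set U : Set (Fin k → ℝ) := S ∩ {x | MvPolynomial.eval x f ≠ 0} with hU
  have hUopen : IsOpen U := by
    apply IsOpen.inter
    · exact isOpen_set_pi Set.finite_univ (fun j _ => isOpen_Ioo)
    · exact isOpen_ne.preimage (MvPolynomial.continuous_eval f)
  have hUne : U.Nonempty := ⟨x₀, hx₀S, hx₀⟩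
  have hUpos : 0 < volume U := hUopen.measure_pos volume hUne
  have hUsub : U ⊆ Function.support g ∩ S := by
    rintro x ⟨hxS, hxne⟩
    refine ⟨?_, hxS⟩
    show g x ≠ 0
    rw [hg]
    simp only
    apply ne_of_gt
    exact mul_pos (mul_pos (pow_two_pos_of_ne_zero hxne) (hvand x hxS)) (hwprod x hxS)
  rw [setIntegral_pos_iff_support_of_nonneg_ae hnonneg hgint]
  exact lt_of_lt_of_le hUpos (measure_mono hUsub)
end

section
/- Let E_alpha, E_beta be two polynomial solutions of the Heine-Stieltjes equation prod_{i=0}^k (x-e_i) y'' + sum_{j=0}^k m_j prod_{i != j} (x-e_i) y' + V(x) y = 0 with distinct van Vleck polynomials V_alpha, V_beta. Then for every j in {1,...,k}, <E_alpha, (V_alpha - V_beta) E_beta>_j = 0, where <f,g>_j = integral from e_{j-1} to e_j of f g w with w(x) = prod_i |x - e_i|^{m_i - 1}. -/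
open Polynomial MeasureTheory

private lemma mul_rpow_sub_one' {s q : ℝ} (hs : 0 < s) : s * s ^ (q - 1) = s ^ q := by
  rw [Real.rpow_sub_one hs.ne' q]
  field_simp

private lemma phi_hasDerivAt {c q x : ℝ} (hx : x ≠ c) :
    HasDerivAt (fun y => (y - c) * |y - c| ^ (q - 1)) (q * |x - c| ^ (q - 1)) x := by
  rcases hx.lt_or_gt with h | h
  · have hpos : (0:ℝ) < c - x := by linarith
    have inner : HasDerivAt (fun y : ℝ => c - y) (-1) x := (hasDerivAt_id x).const_sub c
    have outer := Real.hasDerivAt_rpow_const (x := c - x) (p := q) (Or.inl hpos.ne')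
    have h1 : HasDerivAt (fun y : ℝ => -((c - y) ^ q)) (q * (c - x) ^ (q - 1)) x := by
      have := (outer.comp x inner).neg
      convert this using 1
      · rfl
      · rfl
      · rfl
      ring
    have h2 : HasDerivAt (fun y => (y - c) * |y - c| ^ (q - 1)) (q * (c - x) ^ (q - 1)) x := by
      apply h1.congr_of_eventuallyEq
      filter_upwards [Iio_mem_nhds h] with y hy
      have hy' : (0:ℝ) < c - y := by simpa using hy
      rw [abs_sub_comm, abs_of_pos hy', show y - c = -(c - y) by ring, neg_mul,
        mul_rpow_sub_one' hy']
    rwa [abs_sub_comm, abs_of_pos hpos]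
  · have hpos : (0:ℝ) < x - c := by linarith
    have inner : HasDerivAt (fun y : ℝ => y - c) 1 x := (hasDerivAt_id x).sub_const c
    have outer := Real.hasDerivAt_rpow_const (x := x - c) (p := q) (Or.inl hpos.ne')
    have h1 : HasDerivAt (fun y : ℝ => (y - c) ^ q) (q * (x - c) ^ (q - 1)) x := by
      have := outer.comp x inner
      convert this using 1
      · rfl
      · rfl
      · rfl
      ring
    have h2 : HasDerivAt (fun y => (y - c) * |y - c| ^ (q - 1)) (q * (x - c) ^ (q - 1)) x := by
      apply h1.congr_of_eventuallyEq
      filter_upwards [Ioi_mem_nhds h] with y hy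
      have hy' : (0:ℝ) < y - c := by simpa using hy
      rw [abs_of_pos hy', mul_rpow_sub_one' hy']
    rwa [abs_of_pos hpos]

private lemma phi_continuous {c q : ℝ} (hq : 0 < q) :
    Continuous (fun y => (y - c) * |y - c| ^ (q - 1)) := by
  rw [continuous_iff_continuousAt]
  intro x
  rcases eq_or_ne x c with rfl | hx
  · have hval : (fun y => (y - x) * |y - x| ^ (q - 1)) x = 0 := by simp
    unfold ContinuousAt
    rw [hval]
    apply squeeze_zero_norm (a := fun y => |y - x| ^ q)
    · intro t
      rcases eq_or_ne t x with rfl | ht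
      · simp [Real.zero_rpow hq.ne']
      · have hpos : (0:ℝ) < |t - x| := abs_pos.mpr (sub_ne_zero.mpr ht)
        rw [Real.norm_eq_abs, abs_mul, abs_of_nonneg (Real.rpow_nonneg (abs_nonneg _) _),
          ← abs_sub_comm x t, abs_sub_comm, mul_rpow_sub_one' hpos]
    · have h1 : Filter.Tendsto (fun y : ℝ => |y - x|) (nhds x) (nhds 0) := by
        have := (continuous_abs.comp (continuous_id.sub (continuous_const (y := x)))).tendsto x
        simpa [eval_prod, eval_finset_sum, Function.comp_def, Pi.sub_apply] using this
      have h0 : Filter.Tendsto (fun s : ℝ => s ^ q) (nhds 0) (nhds 0) := by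
        have := Real.continuousAt_rpow_const 0 q (Or.inr hq.le)
        simpa [ContinuousAt, Real.zero_rpow hq.ne'] using this
      exact h0.comp h1
  · exact (phi_hasDerivAt hx).continuousAt

theorem stmt5 (k : ℕ) (e : Fin (k + 1) → ℝ) (he : StrictMono e)
    (m : Fin (k + 1) → ℝ) (hm : ∀ i, 0 < m i)
    (Ea Eb Va Vb : Polynomial ℝ)
    (ha : (∏ i, (X - C (e i))) * Ea.derivative.derivative +
        (∑ j, C (m j) * ∏ i ∈ Finset.univ.erase j, (X - C (e i))) * Ea.derivative +
        Va * Ea = 0)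
    (hb : (∏ i, (X - C (e i))) * Eb.derivative.derivative +
        (∑ j, C (m j) * ∏ i ∈ Finset.univ.erase j, (X - C (e i))) * Eb.derivative +
        Vb * Eb = 0)
    (hV : Va ≠ Vb) :
    ∀ j : Fin k,
      ∫ x in Set.Ioo (e j.castSucc) (e j.succ),
        Ea.eval x * ((Va - Vb).eval x * Eb.eval x) *
          ∏ i, |x - e i| ^ (m i - 1) = 0 := by
  intro j
  set a := e j.castSucc with ha'
  set b := e j.succ with hb'
  have hab : a < b := he (Fin.castSucc_lt_succ : j.castSucc < j.succ)
  set f : ℝ → ℝ := fun x =>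
    Ea.eval x * ((Va - Vb).eval x * Eb.eval x) * ∏ i, |x - e i| ^ (m i - 1) with hf
  show ∫ x in Set.Ioo a b, f x = 0
  by_cases hint : IntegrableOn f (Set.Ioo a b) volume
  swap
  · exact MeasureTheory.integral_undef hint
  set W : Polynomial ℝ := derivative Ea * Eb - Ea * derivative Eb with hWdef
  set φ : Fin (k+1) → ℝ → ℝ := fun i x => (x - e i) * |x - e i| ^ (m i - 1) with hφ
  set G : ℝ → ℝ := fun x => W.eval x * ∏ i, φ i x with hG
  -- interior points avoid the nodes
  have hne : ∀ x ∈ Set.Ioo a b, ∀ i, x ≠ e i := by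
    intro x hx i
    rcases le_or_gt (i : ℕ) (j : ℕ) with hij | hij
    · have : e i ≤ a := he.monotone (by simpa [Fin.le_def] using hij)
      exact (lt_of_le_of_lt this hx.1).ne'
    · have : b ≤ e i := he.monotone (by simp [Fin.le_def]; omega)
      exact (lt_of_lt_of_le hx.2 this).ne
  -- derivative
  have hderiv : ∀ x ∈ Set.Ioo a b, HasDerivAt G (-f x) x := by
    intro x hx
    have hφd : ∀ i : Fin (k+1), HasDerivAt (φ i) (m i * |x - e i| ^ (m i - 1)) x :=
      fun i => phi_hasDerivAt (hne x hx i)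
    have hprod : HasDerivAt (fun y => ∏ i, φ i y)
        (∑ i, (∏ l ∈ Finset.univ.erase i, φ l x) • (m i * |x - e i| ^ (m i - 1))) x :=
      HasDerivAt.fun_finsetProd (fun i _ => hφd i)
    have hWd : HasDerivAt (fun y => W.eval y) ((derivative W).eval x) x := W.hasDerivAt x
    have hmul := hWd.mul hprod
    convert hmul using 1
    · rfl
    · rfl
    · rfl
    -- algebra
    have hprodφ : ∏ i, φ i x = (∏ i, (x - e i)) * ∏ i, |x - e i| ^ (m i - 1) := by
      rw [hφ, ← Finset.prod_mul_distrib]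
    have hsum : ∑ i : Fin (k+1), (∏ l ∈ Finset.univ.erase i, φ l x) • (m i * |x - e i| ^ (m i - 1))
        = (∑ i, m i * ∏ l ∈ Finset.univ.erase i, (x - e l)) * ∏ i, |x - e i| ^ (m i - 1) := by
      rw [Finset.sum_mul]
      refine Finset.sum_congr rfl fun i _ => ?_
      rw [smul_eq_mul]
      have h1 : ∏ l ∈ Finset.univ.erase i, φ l x
          = (∏ l ∈ Finset.univ.erase i, (x - e l))
            * ∏ l ∈ Finset.univ.erase i, |x - e l| ^ (m l - 1) := by
        rw [hφ, ← Finset.prod_mul_distrib]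
      have h2 : (∏ l ∈ Finset.univ.erase i, |x - e l| ^ (m l - 1)) * |x - e i| ^ (m i - 1)
          = ∏ i, |x - e i| ^ (m i - 1) := Finset.prod_erase_mul _ _ (Finset.mem_univ i)
      rw [h1, ← h2]
      ring
    have hWeval : (derivative W).eval x
        = (derivative (derivative Ea)).eval x * Eb.eval x
          - Ea.eval x * (derivative (derivative Eb)).eval x := by
      rw [hWdef]
      simp only [derivative_sub, derivative_mul, eval_sub, eval_add, eval_mul]
      ring
    have hWx : W.eval x = (derivative Ea).eval x * Eb.eval x
        - Ea.eval x * (derivative Eb).eval x := by rw [hWdef]; simp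
    have hax' : (∏ i, (x - e i)) * eval x (derivative (derivative Ea))
        + (∑ i, m i * ∏ l ∈ Finset.univ.erase i, (x - e l)) * eval x (derivative Ea)
        + eval x Va * eval x Ea = 0 := by
      have := congrArg (eval x) ha
      simpa [eval_prod, eval_finset_sum] using this
    have hbx' : (∏ i, (x - e i)) * eval x (derivative (derivative Eb))
        + (∑ i, m i * ∏ l ∈ Finset.univ.erase i, (x - e l)) * eval x (derivative Eb)
        + eval x Vb * eval x Eb = 0 := by
      have := congrArg (eval x) hb
      simpa [eval_prod, eval_finset_sum] using this
    rw [hprodφ, hsum, hWeval, hWx]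
    simp only [hf, eval_sub]
    linear_combination (- eval x Eb * ∏ i, |x - e i| ^ (m i - 1)) * hax'
      + (eval x Ea * ∏ i, |x - e i| ^ (m i - 1)) * hbx'
  -- continuity of G and endpoint limits
  have hGc : Continuous G := by
    apply Continuous.mul
    · exact W.continuous
    · exact continuous_finset_prod _ (fun i _ => phi_continuous (hm i))
  have hGa : G a = 0 := by
    show W.eval a * ∏ i, φ i a = 0
    rw [Finset.prod_eq_zero (Finset.mem_univ j.castSucc)
      (show φ j.castSucc a = 0 by simp [hφ, ha']), mul_zero]
  have hGb : G b = 0 := by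
    show W.eval b * ∏ i, φ i b = 0
    rw [Finset.prod_eq_zero (Finset.mem_univ j.succ)
      (show φ j.succ b = 0 by simp [hφ, hb']), mul_zero]
  have hta : Filter.Tendsto G (nhdsWithin a (Set.Ioi a)) (nhds 0) := by
    have := hGc.continuousAt (x := a)
    rw [ContinuousAt, hGa] at this
    exact this.mono_left nhdsWithin_le_nhds
  have htb : Filter.Tendsto G (nhdsWithin b (Set.Iio b)) (nhds 0) := by
    have := hGc.continuousAt (x := b)
    rw [ContinuousAt, hGb] at this
    exact this.mono_left nhdsWithin_le_nhds
  have hItv : IntervalIntegrable f volume a b :=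
    (intervalIntegrable_iff_integrableOn_Ioo_of_le hab.le).mpr hint
  have key := intervalIntegral.integral_eq_sub_of_hasDerivAt_of_tendsto hab hderiv hItv.neg hta htb
  rw [sub_zero, intervalIntegral.integral_neg, neg_eq_zero] at key
  rw [← MeasureTheory.integral_Ioc_eq_integral_Ioo, ← intervalIntegral.integral_of_le hab.le]
  exact key
end

section
/- Let E_1, ..., E_N be real polynomials of degree n such that the symmetric polynomials E_alpha^{(k-1)}(x_1,...,x_{k-1}) = E_alpha(x_1) ... E_alpha(x_{k-1}) are linearly independent. Suppose p is a polynomial of degree n with p^{(k)} = sum_alpha lambda_alpha E_alpha^{(k)}. Then lambda_alpha = 0 for every alpha such that E_alpha is not proportional to p. (Rank-one uniqueness.) -/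
theorem stmt13 (k n N : ℕ) (hk : 1 ≤ k)
    (E : Fin N → Polynomial ℝ) (hdeg : ∀ α, (E α).natDegree = n)
    (hind : LinearIndependent ℝ (fun α : Fin N =>
      ∏ i : Fin (k - 1),
        Polynomial.aeval (MvPolynomial.X i : MvPolynomial (Fin (k - 1)) ℝ) (E α)))
    (p : Polynomial ℝ) (hp : p.natDegree = n) (lam : Fin N → ℝ)
    (hsum : (∏ i : Fin k,
        Polynomial.aeval (MvPolynomial.X i : MvPolynomial (Fin k) ℝ) p) =
      ∑ α, lam α • ∏ i : Fin k,
        Polynomial.aeval (MvPolynomial.X i : MvPolynomial (Fin k) ℝ) (E α)) :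
    ∀ α, lam α ≠ 0 → ∃ c : ℝ, E α = c • p := by
  obtain ⟨m, rfl⟩ : ∃ m, k = m + 1 := ⟨k - 1, (Nat.succ_pred_eq_of_pos hk).symm⟩
  set V : Fin N → MvPolynomial (Fin m) ℝ :=
    fun α => ∏ i : Fin m, Polynomial.aeval (MvPolynomial.X i) (E α) with hV
  have hLI := Fintype.linearIndependent_iff.mp hind
  -- key specialization identity
  have key : ∀ a : ℝ,
      (p.eval a) • (∏ i : Fin m, Polynomial.aeval (MvPolynomial.X i) p) =
        ∑ α, (lam α * (E α).eval a) • V α := by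
    intro a
    have h := congrArg
      (MvPolynomial.aeval
        (Fin.lastCases (MvPolynomial.C a) MvPolynomial.X :
          Fin (m + 1) → MvPolynomial (Fin m) ℝ)) hsum
    have hq : ∀ q : Polynomial ℝ,
        (MvPolynomial.aeval
          (Fin.lastCases (MvPolynomial.C a) MvPolynomial.X :
            Fin (m + 1) → MvPolynomial (Fin m) ℝ))
          (∏ i : Fin (m + 1),
            Polynomial.aeval (MvPolynomial.X i : MvPolynomial (Fin (m + 1)) ℝ) q) =
        (q.eval a) • ∏ i : Fin m, Polynomial.aeval (MvPolynomial.X i) q := by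
      intro q
      rw [map_prod]
      have : ∀ i : Fin (m + 1),
          (MvPolynomial.aeval
            (Fin.lastCases (MvPolynomial.C a) MvPolynomial.X :
              Fin (m + 1) → MvPolynomial (Fin m) ℝ))
            (Polynomial.aeval (MvPolynomial.X i : MvPolynomial (Fin (m + 1)) ℝ) q) =
          Polynomial.aeval
            ((Fin.lastCases (MvPolynomial.C a) MvPolynomial.X :
              Fin (m + 1) → MvPolynomial (Fin m) ℝ) i) q := by
        intro i
        rw [← Polynomial.aeval_algHom_apply, MvPolynomial.aeval_X]
      simp only [this]
      rw [Fin.prod_univ_castSucc]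
      simp only [Fin.lastCases_castSucc, Fin.lastCases_last]
      rw [← MvPolynomial.algebraMap_eq, Polynomial.aeval_algebraMap_apply_eq_algebraMap_eval,
        MvPolynomial.algebraMap_eq, mul_comm, ← MvPolynomial.smul_eq_C_mul]
    rw [hq, map_sum] at h
    rw [h]
    refine Finset.sum_congr rfl fun α _ => ?_
    rw [map_smul, hq, smul_smul]
  intro α hα
  -- reduce to pointwise proportionality
  suffices h : ∃ c : ℝ, ∀ a : ℝ, (E α).eval a = c * p.eval a by
    obtain ⟨c, hc⟩ := h
    exact ⟨c, Polynomial.funext fun a => by simp [hc a]⟩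
  by_cases hp0 : p = 0
  · refine ⟨0, fun a => ?_⟩
    have h := key a
    rw [hp0] at h
    simp only [Polynomial.eval_zero, zero_smul] at h
    have := hLI (fun β => lam β * (E β).eval a) h.symm α
    have : (E α).eval a = 0 := by
      rcases mul_eq_zero.mp this with h' | h'
      · exact absurd h' hα
      · exact h'
    simp [this, hp0]
  · obtain ⟨a₀, ha₀⟩ : ∃ a₀, p.eval a₀ ≠ 0 := by
      by_contra h
      push_neg at h
      exact hp0 (Polynomial.funext fun a => by simp [h a])
    refine ⟨(E α).eval a₀ / p.eval a₀, fun a => ?_⟩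
    have h1 := congrArg (fun x => (p.eval a₀) • x) (key a)
    have h2 := congrArg (fun x => (p.eval a) • x) (key a₀)
    simp only [smul_smul, Finset.smul_sum, mul_comm (p.eval a₀) (p.eval a)] at h1 h2
    have h3 : ∑ β, ((p.eval a₀ * (lam β * (E β).eval a))
        - (p.eval a * (lam β * (E β).eval a₀))) • V β = 0 := by
      simp only [sub_smul, Finset.sum_sub_distrib]
      rw [← h1, ← h2]
      simp
    have h4 := hLI _ h3 α
    have h5 : p.eval a₀ * (lam α * (E α).eval a) = p.eval a * (lam α * (E α).eval a₀) :=
      sub_eq_zero.mp h4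
    have h6 : lam α * ((E α).eval a * p.eval a₀) = lam α * ((E α).eval a₀ * p.eval a) := by
      linear_combination h5
    have h7 := mul_left_cancel₀ hα h6
    field_simp
    linear_combination h7
end

section
/- Over an inner product space V_n^k of symmetric polynomials, suppose {E_alpha}_alpha and {E'_alpha}_alpha are two families of degree-n polynomials such that both families {E_alpha^{(k)}} and {(E'_alpha)^{(k)}} are bases of the orthogonal complement of V_{n-1}^k in V_n^k. Then the two families coincide up to permutation and rescaling of their members. -/
open MvPolynomial

noncomputable abbrev stmtPhi (k' j : ℕ) :
    MvPolynomial (Fin (k'+1)) ℝ →ₗ[ℝ] MvPolynomial (Fin k') ℝ :=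
  ((Polynomial.lcoeff (MvPolynomial (Fin k') ℝ) j).restrictScalars ℝ).comp
    (finSuccEquiv ℝ k').toAlgHom.toLinearMap

lemma stmt14_aux1 (k' : ℕ) (p : Polynomial ℝ) :
    (finSuccEquiv ℝ k') (∏ i : Fin (k'+1),
        Polynomial.aeval (X i : MvPolynomial (Fin (k'+1)) ℝ) p)
      = Polynomial.aeval (Polynomial.X : Polynomial (MvPolynomial (Fin k') ℝ)) p *
        Polynomial.C (∏ i : Fin k',
          Polynomial.aeval (X i : MvPolynomial (Fin k') ℝ) p) := by
  rw [Fin.prod_univ_succ, map_mul, map_prod]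
  congr 1
  · rw [← Polynomial.aeval_algHom_apply, finSuccEquiv_X_zero]
  · rw [map_prod (Polynomial.C : MvPolynomial (Fin k') ℝ →+* Polynomial (MvPolynomial (Fin k') ℝ))
      (fun i : Fin k' => Polynomial.aeval (X i : MvPolynomial (Fin k') ℝ) p) Finset.univ]
    refine Finset.prod_congr rfl fun i _ => ?_
    rw [← Polynomial.aeval_algHom_apply, finSuccEquiv_X_succ]
    exact (Polynomial.aeval_algHom_apply (Polynomial.CAlgHom (R := ℝ)) (X i) p)

lemma stmt14_aux2 (k' : ℕ) (p : Polynomial ℝ) :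
    Polynomial.aeval (Polynomial.X : Polynomial (MvPolynomial (Fin k') ℝ)) p
      = p.map (algebraMap ℝ (MvPolynomial (Fin k') ℝ)) := by
  have h := Polynomial.eval_unique
    (Polynomial.mapAlgHom (Algebra.ofId ℝ (MvPolynomial (Fin k') ℝ))) p
  simp only [Polynomial.coe_mapAlgHom, Polynomial.map_X] at h
  rw [Polynomial.aeval_def, ← h]
  rfl

lemma stmt14_aux3 (k' j : ℕ) (p : Polynomial ℝ) :
    stmtPhi k' j (∏ i : Fin (k'+1),
        Polynomial.aeval (X i : MvPolynomial (Fin (k'+1)) ℝ) p)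
      = p.coeff j • ∏ i : Fin k',
          Polynomial.aeval (X i : MvPolynomial (Fin k') ℝ) p := by
  show Polynomial.coeff ((finSuccEquiv ℝ k') (∏ i : Fin (k'+1),
        Polynomial.aeval (X i : MvPolynomial (Fin (k'+1)) ℝ) p)) j = _
  rw [stmt14_aux1, Polynomial.coeff_mul_C, stmt14_aux2, Polynomial.coeff_map,
    MvPolynomial.algebraMap_eq, smul_eq_C_mul]

lemma stmt14_aux4 (k' j : ℕ) (q : MvPolynomial (Fin (k'+1)) ℝ) :
    stmtPhi k' j q = Polynomial.coeff ((finSuccEquiv ℝ k') q) j := rfl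

/-- `V_n^k`: the space of symmetric polynomials in `k` variables whose degree in
each variable is at most `n`. -/
noncomputable def symDegLE (k n : ℕ) : Submodule ℝ (MvPolynomial (Fin k) ℝ) where
  carrier := {p | p.IsSymmetric ∧ ∀ i, p.degreeOf i ≤ n}
  add_mem' := fun hp hq => ⟨hp.1.add hq.1, fun i =>
    le_trans (MvPolynomial.degreeOf_add_le i _ _) (max_le (hp.2 i) (hq.2 i))⟩
  zero_mem' := ⟨fun e => by simp, fun i => by simp⟩
  smul_mem' := fun c p hp => ⟨hp.1.smul c, fun i => by
    rw [MvPolynomial.smul_eq_C_mul]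
    exact le_trans (MvPolynomial.degreeOf_C_mul_le p i c) (hp.2 i)⟩

theorem stmt14 (k n N : ℕ) (hn : 1 ≤ n)
    (B : LinearMap.BilinForm ℝ (MvPolynomial (Fin k) ℝ))
    (hBsymm : ∀ f g, B f g = B g f)
    (hBpos : ∀ f ∈ symDegLE k n, f ≠ 0 → 0 < B f f)
    (E E' : Fin N → Polynomial ℝ)
    (hdeg : ∀ α, (E α).natDegree = n) (hdeg' : ∀ α, (E' α).natDegree = n)
    (hind : LinearIndependent ℝ (fun α : Fin N =>
      ∏ i : Fin k, Polynomial.aeval (MvPolynomial.X i : MvPolynomial (Fin k) ℝ) (E α)))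
    (hspan : Submodule.span ℝ (Set.range (fun α : Fin N =>
        ∏ i : Fin k, Polynomial.aeval (MvPolynomial.X i : MvPolynomial (Fin k) ℝ) (E α))) =
      symDegLE k n ⊓ B.orthogonal (symDegLE k (n - 1)))
    (hind' : LinearIndependent ℝ (fun α : Fin N =>
      ∏ i : Fin k, Polynomial.aeval (MvPolynomial.X i : MvPolynomial (Fin k) ℝ) (E' α)))
    (hspan' : Submodule.span ℝ (Set.range (fun α : Fin N =>
        ∏ i : Fin k, Polynomial.aeval (MvPolynomial.X i : MvPolynomial (Fin k) ℝ) (E' α))) =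
      symDegLE k n ⊓ B.orthogonal (symDegLE k (n - 1))) :
    ∃ σ : Equiv.Perm (Fin N), ∀ α, ∃ c : ℝ, c ≠ 0 ∧ E' α = c • E (σ α) := by
  -- trivial case N = 0
  rcases Nat.eq_zero_or_pos N with hN | hN
  · subst hN
    exact ⟨Equiv.refl _, fun α => α.elim0⟩
  -- the case k = 0 is contradictory
  have hkne : k ≠ 0 := by
    intro hk0
    subst hk0
    set v : Fin N → MvPolynomial (Fin 0) ℝ := fun α =>
      ∏ i : Fin 0, Polynomial.aeval (MvPolynomial.X i : MvPolynomial (Fin 0) ℝ) (E α) with hv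
    have hone : v ⟨0, hN⟩ = 1 := by simp [hv]
    have hmem : (1 : MvPolynomial (Fin 0) ℝ) ∈
        symDegLE 0 n ⊓ B.orthogonal (symDegLE 0 (n-1)) := by
      rw [← hspan, ← hone]
      exact Submodule.subset_span ⟨_, rfl⟩
    have h1 : (1 : MvPolynomial (Fin 0) ℝ) ∈ symDegLE 0 (n-1) :=
      ⟨fun e => map_one _, fun i => i.elim0⟩
    have hz : B 1 1 = 0 := hmem.2 1 h1
    have hp : (0:ℝ) < B 1 1 :=
      hBpos 1 ⟨fun e => map_one _, fun i => i.elim0⟩ one_ne_zero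
    rw [hz] at hp; exact lt_irrefl 0 hp
  obtain ⟨k', rfl⟩ : ∃ k', k = k' + 1 := ⟨k - 1, by omega⟩
  set V : Fin N → MvPolynomial (Fin (k'+1)) ℝ := fun α =>
    ∏ i : Fin (k'+1), Polynomial.aeval (MvPolynomial.X i : MvPolynomial (Fin (k'+1)) ℝ) (E α)
    with hV
  set V' : Fin N → MvPolynomial (Fin (k'+1)) ℝ := fun α =>
    ∏ i : Fin (k'+1), Polynomial.aeval (MvPolynomial.X i : MvPolynomial (Fin (k'+1)) ℝ) (E' α)
    with hV'
  set G : Fin N → MvPolynomial (Fin k') ℝ := fun α =>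
    ∏ i : Fin k', Polynomial.aeval (MvPolynomial.X i : MvPolynomial (Fin k') ℝ) (E α) with hG
  set G' : Fin N → MvPolynomial (Fin k') ℝ := fun α =>
    ∏ i : Fin k', Polynomial.aeval (MvPolynomial.X i : MvPolynomial (Fin k') ℝ) (E' α) with hG'
  set a : Fin N → ℝ := fun α => (E α).coeff n with ha
  set a' : Fin N → ℝ := fun α => (E' α).coeff n with ha'
  have hEne : ∀ α, E α ≠ 0 := fun α h => by
    have := hdeg α; rw [h] at this; simp at this; omega
  have hE'ne : ∀ α, E' α ≠ 0 := fun α h => by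
    have := hdeg' α; rw [h] at this; simp at this; omega
  have hane : ∀ α, a α ≠ 0 := fun α => by
    have : a α = (E α).leadingCoeff := by rw [Polynomial.leadingCoeff, hdeg]
    rw [this, Ne, Polynomial.leadingCoeff_eq_zero]; exact hEne α
  have ha'ne : ∀ α, a' α ≠ 0 := fun α => by
    have : a' α = (E' α).leadingCoeff := by rw [Polynomial.leadingCoeff, hdeg']
    rw [this, Ne, Polynomial.leadingCoeff_eq_zero]; exact hE'ne α
  -- the kernel of φ n is disjoint from W
  have hker : ∀ w ∈ symDegLE (k'+1) n ⊓ B.orthogonal (symDegLE (k'+1) (n-1)),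
      stmtPhi k' n w = 0 → w = 0 := by
    intro w hw h0
    by_contra hwne
    have hfne : finSuccEquiv ℝ k' w ≠ 0 := by
      intro h
      apply hwne
      apply (finSuccEquiv ℝ k').injective
      rw [h, map_zero]
    have hd0 : degreeOf 0 w ≤ n - 1 := by
      rw [stmt14_aux4] at h0
      have hnd : (finSuccEquiv ℝ k' w).natDegree = degreeOf 0 w :=
        natDegree_finSuccEquiv w
      have hle : degreeOf 0 w ≤ n := hw.1.2 0
      rcases lt_or_eq_of_le hle with h | h
      · omega
      · exfalso
        apply hfne
        rw [← Polynomial.leadingCoeff_eq_zero, Polynomial.leadingCoeff, hnd, h]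
        exact h0
    have hall : ∀ i, degreeOf i w ≤ n - 1 := by
      intro i
      have hs : rename (Equiv.swap (0 : Fin (k'+1)) i) w = w := hw.1.1 (Equiv.swap 0 i)
      have h2 := degreeOf_rename_of_injective (p := w)
        (Equiv.injective (Equiv.swap (0 : Fin (k'+1)) i)) 0
      rw [hs, Equiv.swap_apply_left] at h2
      rw [h2]; exact hd0
    have hmem : w ∈ symDegLE (k'+1) (n-1) := ⟨hw.1.1, hall⟩
    have hz : B w w = 0 := hw.2 w hmem
    have hp : (0:ℝ) < B w w :=
      hBpos w ⟨hw.1.1, fun i => le_trans (hall i) (by omega)⟩ hwne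
    rw [hz] at hp; exact lt_irrefl 0 hp
  have hdisj : Disjoint (Submodule.span ℝ (Set.range V)) (LinearMap.ker (stmtPhi k' n)) := by
    rw [Submodule.disjoint_def]
    intro x hx hk
    exact hker x (by rw [← hspan]; exact hx) (LinearMap.mem_ker.1 hk)
  -- independence of the G family
  have hGind0 : LinearIndependent ℝ (fun α => a α • G α) := by
    have h1 := hind.map hdisj
    have heq : (stmtPhi k' n) ∘ V = fun α => a α • G α := by
      funext α; exact stmt14_aux3 k' n (E α)
    rwa [heq] at h1
  have hGind : LinearIndependent ℝ G := by
    have h1 := hGind0.units_smul (fun α => (Units.mk0 (a α) (hane α))⁻¹)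
    have heq : ((fun α => (Units.mk0 (a α) (hane α))⁻¹) • fun α => a α • G α) = G := by
      funext α
      simp only [Pi.smul_apply', Units.smul_def, Units.val_inv_eq_inv_val, Units.val_mk0]
      rw [smul_smul, inv_mul_cancel₀ (hane α), one_smul]
    rwa [heq] at h1
  -- each G' α, V' α is nonzero
  have hV'ne : ∀ α, V' α ≠ 0 := fun α => hind'.ne_zero α
  have hG'ne : ∀ α, G' α ≠ 0 := by
    intro α h
    apply hV'ne α
    apply (finSuccEquiv ℝ k').injective
    rw [map_zero, hV']
    show (finSuccEquiv ℝ k') (∏ i : Fin (k'+1),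
      Polynomial.aeval (MvPolynomial.X i : MvPolynomial (Fin (k'+1)) ℝ) (E' α)) = 0
    rw [stmt14_aux1, show (∏ i : Fin k',
      Polynomial.aeval (MvPolynomial.X i : MvPolynomial (Fin k') ℝ) (E' α)) = G' α from rfl,
      h, map_zero, mul_zero]
  -- main claim
  have key : ∀ α, ∃ β, ∃ c : ℝ, c ≠ 0 ∧ E' α = c • E β := by
    intro α
    have hmem : V' α ∈ Submodule.span ℝ (Set.range V) := by
      rw [hspan, ← hspan']
      exact Submodule.subset_span ⟨α, rfl⟩
    obtain ⟨c, hc⟩ := (Submodule.mem_span_range_iff_exists_fun ℝ).1 hmem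
    have happ : ∀ j, (E' α).coeff j • G' α = ∑ β, (c β * (E β).coeff j) • G β := by
      intro j
      have h1 := congrArg (stmtPhi k' j) hc
      rw [map_sum] at h1
      simp only [map_smul] at h1
      have h2 : stmtPhi k' j (V' α) = (E' α).coeff j • G' α := stmt14_aux3 k' j (E' α)
      rw [h2] at h1
      rw [← h1]
      refine Finset.sum_congr rfl fun β _ => ?_
      rw [show stmtPhi k' j (V β) = (E β).coeff j • G β from stmt14_aux3 k' j (E β), smul_smul]
    set d : Fin N → ℝ := fun β => c β * a β / a' α with hd
    have hG'eq : G' α = ∑ β, d β • G β := by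
      have h1 := happ n
      have h3 : (a' α)⁻¹ • (a' α • G' α) = (a' α)⁻¹ • ∑ β, (c β * a β) • G β := by rw [h1]
      rw [smul_smul, inv_mul_cancel₀ (ha'ne α), one_smul, Finset.smul_sum] at h3
      rw [h3]
      refine Finset.sum_congr rfl fun β _ => ?_
      rw [smul_smul, hd]
      congr 1
      field_simp
    have hcd : ∀ j β, (E' α).coeff j * d β = c β * (E β).coeff j := by
      intro j β
      have h2 : ∑ β, ((E' α).coeff j * d β) • G β = ∑ β, (c β * (E β).coeff j) • G β := by
        rw [← happ j, hG'eq, Finset.smul_sum]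
        exact Finset.sum_congr rfl fun β _ => by rw [smul_smul]
      have h3 : ∑ β, (((E' α).coeff j * d β) - c β * (E β).coeff j) • G β = 0 := by
        simp only [sub_smul, Finset.sum_sub_distrib, h2, sub_self]
      have h4 := Fintype.linearIndependent_iff.1 hGind _ h3 β
      linarith [h4]
    obtain ⟨β0, hd0⟩ : ∃ β0, d β0 ≠ 0 := by
      by_contra hall
      push_neg at hall
      apply hG'ne α
      rw [hG'eq]
      simp [hall]
    have h4 : d β0 • E' α = c β0 • E β0 := by
      ext j
      simp only [Polynomial.coeff_smul, smul_eq_mul]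
      rw [mul_comm, hcd j β0]
    have hc0 : c β0 ≠ 0 := by
      intro h
      rw [h, zero_smul, smul_eq_zero] at h4
      rcases h4 with h | h
      · exact hd0 h
      · exact hE'ne α h
    refine ⟨β0, c β0 / d β0, div_ne_zero hc0 hd0, ?_⟩
    have h5 := congrArg (fun q => (d β0)⁻¹ • q) h4
    simp only [smul_smul, inv_mul_cancel₀ hd0, one_smul] at h5
    rw [h5]
    congr 1
    rw [div_eq_mul_inv, mul_comm]
  -- build the permutation
  choose τ cc hccne hcceq using key
  have hτinj : Function.Injective τ := by
    intro α1 α2 h12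
    by_contra hne
    have hE2 : E (τ α2) = (cc α2)⁻¹ • E' α2 := by
      rw [hcceq α2, smul_smul, inv_mul_cancel₀ (hccne α2), one_smul]
    have hprop : E' α1 = (cc α1 * (cc α2)⁻¹) • E' α2 := by
      rw [hcceq α1, h12, hE2, smul_smul]
    set r : ℝ := cc α1 * (cc α2)⁻¹ with hr
    have hVprop : V' α1 = (r ^ (k'+1)) • V' α2 := by
      rw [hV']
      show (∏ i : Fin (k'+1), Polynomial.aeval
          (MvPolynomial.X i : MvPolynomial (Fin (k'+1)) ℝ) (E' α1)) = _
      have : ∀ i : Fin (k'+1), Polynomial.aeval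
          (MvPolynomial.X i : MvPolynomial (Fin (k'+1)) ℝ) (E' α1)
          = MvPolynomial.C r * Polynomial.aeval
            (MvPolynomial.X i : MvPolynomial (Fin (k'+1)) ℝ) (E' α2) := by
        intro i
        rw [hprop, map_smul, smul_eq_C_mul]
      rw [Finset.prod_congr rfl fun i _ => this i, Finset.prod_mul_distrib,
        Finset.prod_const, Finset.card_univ, Fintype.card_fin, ← map_pow,
        ← smul_eq_C_mul]
    have hlin := Fintype.linearIndependent_iff.1 hind'
      (fun β => if β = α1 then (1:ℝ) else if β = α2 then -(r ^ (k'+1)) else 0)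
    have hsum : ∑ β, (if β = α1 then (1:ℝ) else if β = α2 then -(r ^ (k'+1)) else 0) •
        V' β = 0 := by
      rw [Finset.sum_eq_add_of_mem α1 α2 (Finset.mem_univ _) (Finset.mem_univ _) hne ?_]
      · rw [if_pos rfl, if_neg (Ne.symm hne), if_pos rfl, one_smul, neg_smul, hVprop]
        exact add_neg_cancel _
      · intro β _ hβ
        simp only [if_neg hβ.1, if_neg hβ.2, zero_smul]
    have := hlin hsum α1
    simp at this
  have hτbij : Function.Bijective τ := Finite.injective_iff_bijective.1 hτinj
  refine ⟨Equiv.ofBijective τ hτbij, fun α => ⟨cc α, hccne α, ?_⟩⟩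
  rw [Equiv.ofBijective_apply]
  exact hcceq α
end

section
/- The map from V_n^{k-1} to the orthogonal complement (V_{n-1}^k)^perp in V_n^k, defined as the composite of m_{(mu_1,...,mu_{k-1})} -> m_{(n,mu_1,...,mu_{k-1})} followed by orthogonal projection onto (V_{n-1}^k)^perp, and the map (V_{n-1}^k)^perp -> V_n^{k-1} given by d^n/dx_k^n, witness that these two spaces have the same dimension binomial(n+k-1,k-1). -/
open MvPolynomial

open MvPolynomial Finset

namespace Stmt15Aux

variable {k n : ℕ}

noncomputable def toFs (d : Fin k → Fin (n + 1)) : Fin k →₀ ℕ :=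
  Finsupp.equivFunOnFinite.symm fun i => (d i : ℕ)

lemma toFs_apply (d : Fin k → Fin (n + 1)) (i : Fin k) : toFs d i = d i := rfl

lemma toFs_injective : Function.Injective (toFs (k := k) (n := n)) := by
  intro d d' h
  funext i
  have := congrFun (congrArg (fun f : Fin k →₀ ℕ => (f : Fin k → ℕ)) h) i
  simpa [toFs_apply, Fin.val_injective.eq_iff] using this

def mval (d : Fin k → Fin (n + 1)) : Sym (Fin (n + 1)) k :=
  ⟨(List.ofFn d : Multiset (Fin (n + 1))), by simp⟩

lemma mval_comp (d : Fin k → Fin (n + 1)) (σ : Equiv.Perm (Fin k)) :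
    mval (d ∘ σ) = mval d := by
  apply Subtype.ext
  exact Multiset.coe_eq_coe.mpr (σ.ofFn_comp_perm d)

lemma exists_perm_of_mval_eq {d d' : Fin k → Fin (n + 1)} (h : mval d = mval d') :
    ∃ σ : Equiv.Perm (Fin k), d = d' ∘ σ := by
  have hperm : (List.ofFn d).Perm (List.ofFn d') :=
    Multiset.coe_eq_coe.mp (congrArg Subtype.val h)
  have h1 : (List.ofFn (d ∘ Tuple.sort d)).Perm (List.ofFn (d' ∘ Tuple.sort d')) :=
    ((Tuple.sort d).ofFn_comp_perm d).trans
      (hperm.trans ((Tuple.sort d').ofFn_comp_perm d').symm)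
  have heq : d ∘ Tuple.sort d = d' ∘ Tuple.sort d' :=
    List.ofFn_injective <| List.Perm.eq_of_sortedLE
      (List.sortedLE_ofFn_iff.mpr (Tuple.monotone_sort d))
      (List.sortedLE_ofFn_iff.mpr (Tuple.monotone_sort d')) h1
  refine ⟨(Tuple.sort d)⁻¹.trans (Tuple.sort d'), ?_⟩
  funext i
  have := congrFun heq ((Tuple.sort d)⁻¹ i)
  simpa using this

noncomputable def msym (s : Sym (Fin (n + 1)) k) : MvPolynomial (Fin k) ℝ :=
  ∑ d ∈ univ.filter (fun d => mval d = s), monomial (toFs d) (1 : ℝ)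

lemma coeff_msym (s : Sym (Fin (n + 1)) k) (d₀ : Fin k → Fin (n + 1)) :
    coeff (toFs d₀) (msym s) = if mval d₀ = s then 1 else 0 := by
  rw [msym, coeff_sum]
  have : ∀ d ∈ univ.filter (fun d => mval d = s),
      coeff (toFs d₀) (monomial (toFs d) (1 : ℝ)) = if d = d₀ then 1 else 0 := by
    intro d _
    rw [coeff_monomial]
    exact if_congr toFs_injective.eq_iff rfl rfl
  rw [Finset.sum_congr rfl this, Finset.sum_ite_eq' _ d₀ (fun _ => (1 : ℝ))]
  simp

lemma coeff_msym_ne_zero {s : Sym (Fin (n + 1)) k} {m : Fin k →₀ ℕ}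
    (h : coeff m (msym s) ≠ 0) : ∃ d : Fin k → Fin (n + 1), toFs d = m := by
  by_contra hc
  push_neg at hc
  apply h
  rw [msym, coeff_sum]
  refine Finset.sum_eq_zero fun d _ => ?_
  rw [coeff_monomial, if_neg (hc d)]

lemma exists_toFs {m : Fin k →₀ ℕ} (h : ∀ i, m i ≤ n) :
    ∃ d : Fin k → Fin (n + 1), toFs d = m := by
  refine ⟨fun i => ⟨m i, Nat.lt_succ_of_le (h i)⟩, ?_⟩
  ext i
  simp [toFs_apply]

lemma toFs_le (d : Fin k → Fin (n + 1)) (i : Fin k) : toFs d i ≤ n := by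
  rw [toFs_apply]; exact Fin.is_le _

lemma mapDomain_toFs (σ : Equiv.Perm (Fin k)) (d : Fin k → Fin (n + 1)) :
    Finsupp.mapDomain (⇑σ) (toFs d) = toFs (d ∘ ⇑σ⁻¹) := by
  ext i
  rw [Finsupp.mapDomain_equiv_apply (f := σ)]
  rfl

lemma msym_mem (s : Sym (Fin (n + 1)) k) : msym s ∈ symDegLE k n := by
  constructor
  · intro σ
    rw [msym, map_sum]
    refine Finset.sum_bij' (fun d _ => d ∘ ⇑σ⁻¹) (fun d _ => d ∘ ⇑σ) ?_ ?_ ?_ ?_ ?_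
    · intro d hd
      simp only [Finset.mem_filter, Finset.mem_univ, true_and] at hd ⊢
      rw [mval_comp, hd]
    · intro d hd
      simp only [Finset.mem_filter, Finset.mem_univ, true_and] at hd ⊢
      rw [mval_comp, hd]
    · intro d _; funext i; simp
    · intro d _; funext i; simp
    · intro d _
      rw [rename_monomial, mapDomain_toFs]
  · intro i
    rw [degreeOf_le_iff]
    intro m hm
    rw [mem_support_iff] at hm
    obtain ⟨d, rfl⟩ := coeff_msym_ne_zero hm
    exact toFs_le d i

noncomputable def rep (s : Sym (Fin (n + 1)) k) : Fin k → Fin (n + 1) :=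
  fun i => s.1.toList.get (Fin.cast (by rw [Multiset.length_toList, s.2]) i)

lemma mval_rep (s : Sym (Fin (n + 1)) k) : mval (rep s) = s := by
  apply Subtype.ext
  show ((List.ofFn (rep s) : List (Fin (n+1))) : Multiset (Fin (n + 1))) = s.1
  have : List.ofFn (rep s) = s.1.toList := by
    apply List.ext_get
    · simp [Multiset.length_toList, s.2]
    · intro i h1 h2
      simp [rep, List.get_ofFn]
      rfl
  rw [this, Multiset.coe_toList]

lemma coeff_symm {p : MvPolynomial (Fin k) ℝ} (hp : p.IsSymmetric)
    (σ : Equiv.Perm (Fin k)) (m : Fin k →₀ ℕ) :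
    coeff (Finsupp.mapDomain (⇑σ) m) p = coeff m p := by
  conv_lhs => rw [← hp σ]
  exact coeff_rename_mapDomain (⇑σ) σ.injective p m

lemma coeff_notle_eq_zero {p : MvPolynomial (Fin k) ℝ} (hp : p ∈ symDegLE k n)
    {m : Fin k →₀ ℕ} {i : Fin k} (h : ¬ m i ≤ n) : coeff m p = 0 := by
  by_contra hc
  exact h (degreeOf_le_iff.mp (hp.2 i) m (mem_support_iff.mpr hc))

lemma symDegLE_eq_span :
    symDegLE k n = Submodule.span ℝ (Set.range (msym (k := k) (n := n))) := by
  apply le_antisymm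
  · intro p hp
    have key : p = ∑ s : Sym (Fin (n + 1)) k, coeff (toFs (rep s)) p • msym s := by
      apply MvPolynomial.ext
      intro m
      rw [coeff_sum]
      by_cases hm : ∀ i, m i ≤ n
      · obtain ⟨d, rfl⟩ := exists_toFs hm
        have : ∀ s : Sym (Fin (n + 1)) k,
            coeff (toFs d) (coeff (toFs (rep s)) p • msym s)
              = if mval d = s then coeff (toFs (rep s)) p else 0 := by
          intro s
          rw [coeff_smul, coeff_msym]
          simp [mul_ite]
        rw [Finset.sum_congr rfl fun s _ => this s,
          Finset.sum_ite_eq Finset.univ (mval d) (fun s => coeff (toFs (rep s)) p)]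
        simp only [Finset.mem_univ, if_true]
        obtain ⟨σ, hσ⟩ := exists_perm_of_mval_eq (mval_rep (mval d))
        rw [hσ]
        have : toFs (d ∘ ⇑σ) = Finsupp.mapDomain (⇑σ⁻¹) (toFs d) := by
          rw [mapDomain_toFs]; simp
        rw [this, coeff_symm hp.1]
      · push_neg at hm
        obtain ⟨i, hi⟩ := hm
        rw [coeff_notle_eq_zero hp (not_le.mpr hi)]
        symm
        refine Finset.sum_eq_zero fun s _ => ?_
        rw [coeff_smul, coeff_notle_eq_zero (msym_mem s) (not_le.mpr hi), smul_zero]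
    rw [key]
    exact Submodule.sum_mem _ fun s _ =>
      Submodule.smul_mem _ _ (Submodule.subset_span ⟨s, rfl⟩)
  · rw [Submodule.span_le]
    rintro _ ⟨s, rfl⟩
    exact msym_mem s

lemma msym_linearIndependent : LinearIndependent ℝ (msym (k := k) (n := n)) := by
  rw [Fintype.linearIndependent_iff]
  intro c hc s
  have := congrArg (coeff (toFs (rep s))) hc
  rw [coeff_sum] at this
  simp only [coeff_smul, coeff_msym, coeff_zero] at this
  rw [Finset.sum_congr rfl (fun t _ => by rw [mval_rep s])] at this
  simpa [mul_ite, Finset.sum_ite_eq] using this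

lemma coeff_pderiv (i : Fin k) (p : MvPolynomial (Fin k) ℝ) (m : Fin k →₀ ℕ) :
    coeff m (pderiv i p) = ((m i : ℝ) + 1) * coeff (m + Finsupp.single i 1) p := by
  induction p using MvPolynomial.induction_on' with
  | monomial s a =>
    rw [pderiv_monomial, coeff_monomial, coeff_monomial]
    by_cases hs : s = m + Finsupp.single i 1
    · subst hs
      rw [if_pos, if_pos rfl]
      · simp only [Finsupp.add_apply, Finsupp.single_apply, if_pos rfl, if_true]
        push_cast
        ring
      · ext j
        simp only [Finsupp.coe_tsub, Pi.sub_apply, Finsupp.add_apply, Finsupp.single_apply]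
        omega
    · rw [if_neg hs]
      by_cases hsm : s - Finsupp.single i 1 = m
      · rw [if_pos hsm]
        have hsi : s i = 0 := by
          by_contra hne
          apply hs
          ext j
          have := congrFun (congrArg (fun f : Fin k →₀ ℕ => (f : Fin k → ℕ)) hsm) j
          simp only [Finsupp.coe_tsub, Pi.sub_apply, Finsupp.single_apply] at this
          simp only [Finsupp.add_apply, Finsupp.single_apply]
          rcases eq_or_ne j i with rfl | hj
          · simp at this ⊢
            omega
          · simp [if_neg (Ne.symm hj), if_neg hj] at this ⊢
            omega
        rw [hsi]
        simp
      · rw [if_neg hsm, mul_zero]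
  | add p q hp hq =>
    rw [map_add, coeff_add, coeff_add, hp, hq]
    ring

lemma coeff_iterate_pderiv (i : Fin k) (t : ℕ) (p : MvPolynomial (Fin k) ℝ) (m : Fin k →₀ ℕ) :
    coeff m ((⇑(pderiv i))^[t] p)
      = (∏ s ∈ Finset.range t, ((m i : ℝ) + s + 1)) * coeff (m + Finsupp.single i t) p := by
  induction t generalizing p with
  | zero => simp
  | succ t ih =>
    rw [Function.iterate_succ_apply, ih, coeff_pderiv]
    have h1 : (m + Finsupp.single i t) i = m i + t := by simp
    have h2 : m + Finsupp.single i t + Finsupp.single i 1 = m + Finsupp.single i (t + 1) := by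
      rw [add_assoc, ← Finsupp.single_add]
    rw [h2, h1, Finset.prod_range_succ]
    push_cast
    ring

lemma degreeOf_le_of_iterate_pderiv_eq_zero {p : MvPolynomial (Fin k) ℝ} {i : Fin k} {t : ℕ}
    (ht : 1 ≤ t) (h : (⇑(pderiv i))^[t] p = 0) : p.degreeOf i ≤ t - 1 := by
  rw [degreeOf_le_iff]
  intro m hm
  by_contra hc
  push_neg at hc
  have hge : t ≤ m i := by omega
  have hm' : (m - Finsupp.single i t) + Finsupp.single i t = m := by
    ext j
    rcases eq_or_ne i j with rfl | hj
    · simp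
      omega
    · simp [Finsupp.single_apply, hj]
  have := coeff_iterate_pderiv i t p (m - Finsupp.single i t)
  rw [h, coeff_zero, hm'] at this
  have hprod : (∏ s ∈ Finset.range t, (((m - Finsupp.single i t) i : ℝ) + s + 1)) ≠ 0 := by
    apply Finset.prod_ne_zero_iff.mpr
    intro s _
    positivity
  have hcoeff : coeff m p = 0 := by
    rcases mul_eq_zero.mp this.symm with h' | h'
    · exact absurd h' hprod
    · exact h'
  exact mem_support_iff.mp hm hcoeff

lemma degreeOf_eq_of_symm {p : MvPolynomial (Fin k) ℝ} (hp : p.IsSymmetric) (i j : Fin k) :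
    p.degreeOf i = p.degreeOf j := by
  have h := degreeOf_rename_of_injective (p := p) (f := ⇑(Equiv.swap i j))
    (Equiv.swap i j).injective (i := j)
  rw [hp (Equiv.swap i j), Equiv.swap_apply_right] at h
  exact h

lemma iterate_pderiv_sub (i : Fin k) (t : ℕ) (p q : MvPolynomial (Fin k) ℝ) :
    (⇑(pderiv i))^[t] (p - q) = (⇑(pderiv i))^[t] p - (⇑(pderiv i))^[t] q := by
  induction t generalizing p q with
  | zero => simp
  | succ t ih => rw [Function.iterate_succ_apply', Function.iterate_succ_apply',
      Function.iterate_succ_apply', ih, map_sub]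

lemma finrank_symDegLE (k n : ℕ) :
    Module.finrank ℝ ↥(symDegLE k n) = (n + k).choose k := by
  rw [symDegLE_eq_span, finrank_span_eq_card msym_linearIndependent,
    Sym.card_sym_eq_choose]
  simp [Fintype.card_fin, Nat.add_comm]

instance fd_symDegLE (k n : ℕ) : FiniteDimensional ℝ ↥(symDegLE k n) := by
  rw [symDegLE_eq_span]
  exact FiniteDimensional.span_of_finite ℝ (Set.finite_range _)

end Stmt15Aux

set_option synthInstance.maxHeartbeats 800000 in
set_option maxHeartbeats 1600000 in
open Stmt15Aux in
theorem stmt15 (k n : ℕ) (hk : 1 ≤ k) (hn : 1 ≤ n)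
    (B : LinearMap.BilinForm ℝ (MvPolynomial (Fin k) ℝ))
    (hBsymm : ∀ f g, B f g = B g f)
    (hBpos : ∀ f ∈ symDegLE k n, f ≠ 0 → 0 < B f f) :
    Module.finrank ℝ ↥(symDegLE (k - 1) n) = (n + k - 1).choose (k - 1) ∧
    Module.finrank ℝ ↥(symDegLE k n ⊓ B.orthogonal (symDegLE k (n - 1))) =
      (n + k - 1).choose (k - 1) ∧
    Set.InjOn (fun p : MvPolynomial (Fin k) ℝ =>
        (⇑(MvPolynomial.pderiv (⟨k - 1, by omega⟩ : Fin k)))^[n] p)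
      ↑(symDegLE k n ⊓ B.orthogonal (symDegLE k (n - 1))) := by
  classical
  have hWV : symDegLE k (n - 1) ≤ symDegLE k n := fun p hp =>
    ⟨hp.1, fun i => (hp.2 i).trans (Nat.sub_le n 1)⟩
  refine ⟨?_, ?_, ?_⟩
  · rw [finrank_symDegLE]
    congr 1
    omega
  · -- dimension of the orthogonal complement
    set B' := B.restrict (symDegLE k n) with hB'
    set W' : Submodule ℝ ↥(symDegLE k n) :=
      (symDegLE k (n - 1)).comap (symDegLE k n).subtype with hW'def
    have hrefl : B'.IsRefl := by
      intro x y hxy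
      have h1 : B x.1 y.1 = 0 := hxy
      show B y.1 x.1 = 0
      rw [hBsymm]
      exact h1
    have hnd : (B'.restrict W').Nondegenerate := by
      refine ⟨?_, ?_⟩
      all_goals
        intro x hx
        have hBxx : B (x : ↥(symDegLE k n)).1 (x : ↥(symDegLE k n)).1 = 0 := hx x
        have h0 : ((x : ↥(symDegLE k n)) : MvPolynomial (Fin k) ℝ) = 0 := by
          by_contra hne
          exact absurd hBxx (ne_of_gt (hBpos _ (x : ↥(symDegLE k n)).2 hne))
        apply Subtype.ext
        apply Subtype.ext
        exact h0
    have hcompl := B'.isCompl_orthogonal_of_restrict_nondegenerate hrefl hnd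
    have hsum := Submodule.finrank_add_eq_of_isCompl hcompl
    have horth : B'.orthogonal W'
        = (symDegLE k n ⊓ B.orthogonal (symDegLE k (n - 1))).comap
            (symDegLE k n).subtype := by
      ext v
      rw [LinearMap.BilinForm.mem_orthogonal_iff, Submodule.mem_comap,
        Submodule.mem_inf]
      constructor
      · intro h
        refine ⟨v.2, ?_⟩
        rw [LinearMap.BilinForm.mem_orthogonal_iff]
        intro w hw
        have := h ⟨w, hWV hw⟩ (Submodule.mem_comap.mpr hw)
        rwa [hB',
          LinearMap.BilinForm.restrict_apply] at this
      · intro h u hu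
        rw [hB',
          LinearMap.BilinForm.restrict_apply]
        exact (LinearMap.BilinForm.mem_orthogonal_iff.mp h.2) u.1
          (Submodule.mem_comap.mp hu)
    have hfW' : Module.finrank ℝ ↥W' = Module.finrank ℝ ↥(symDegLE k (n - 1)) :=
      (Submodule.comapSubtypeEquivOfLe hWV).finrank_eq
    have hfO : Module.finrank ℝ ↥(B'.orthogonal W')
        = Module.finrank ℝ ↥(symDegLE k n ⊓ B.orthogonal (symDegLE k (n - 1))) := by
      rw [horth]
      exact (Submodule.comapSubtypeEquivOfLe inf_le_left).finrank_eq
    have e1 : Module.finrank ℝ ↥(symDegLE k n) = (n + k).choose k :=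
      finrank_symDegLE k n
    have e2 : Module.finrank ℝ ↥(symDegLE k (n - 1)) = (n - 1 + k).choose k :=
      finrank_symDegLE k (n - 1)
    have hp : (n + k).choose k = (n + k - 1).choose (k - 1) + (n - 1 + k).choose k := by
      obtain ⟨m, rfl⟩ : ∃ m, n = m + 1 := ⟨n - 1, by omega⟩
      obtain ⟨j, rfl⟩ : ∃ j, k = j + 1 := ⟨k - 1, by omega⟩
      simp only [show m + 1 + (j + 1) = (m + j + 1) + 1 from by omega,
        show m + 1 + (j + 1) - 1 = m + j + 1 from by omega,
        show j + 1 - 1 = j from by omega,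
        show m + 1 - 1 + (j + 1) = m + j + 1 from by omega]
      exact Nat.choose_succ_succ _ _
    omega
  · -- injectivity
    intro p hp q hq hpq
    have hp' : p ∈ symDegLE k n ⊓ B.orthogonal (symDegLE k (n - 1)) := hp
    have hq' : q ∈ symDegLE k n ⊓ B.orthogonal (symDegLE k (n - 1)) := hq
    have hrmem : p - q ∈ symDegLE k n ⊓ B.orthogonal (symDegLE k (n - 1)) :=
      Submodule.sub_mem _ hp' hq'
    have hiter : (⇑(MvPolynomial.pderiv (⟨k - 1, by omega⟩ : Fin k)))^[n] (p - q) = 0 := by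
      rw [iterate_pderiv_sub, sub_eq_zero]
      exact hpq
    have hrV : p - q ∈ symDegLE k n := hrmem.1
    have hdeg : (p - q).degreeOf (⟨k - 1, by omega⟩ : Fin k) ≤ n - 1 :=
      degreeOf_le_of_iterate_pderiv_eq_zero hn hiter
    have hrW : p - q ∈ symDegLE k (n - 1) := by
      refine ⟨hrV.1, fun i => ?_⟩
      rw [degreeOf_eq_of_symm hrV.1 i (⟨k - 1, by omega⟩ : Fin k)]
      exact hdeg
    have hBrr : B (p - q) (p - q) 
        = 0 := (LinearMap.BilinForm.mem_orthogonal_iff.mp hrmem.2) (p - q) hrW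
    have hzero : p - q = 0 := by
      by_contra h0
      exact absurd hBrr (ne_of_gt (hBpos _ hrV h0))
    exact sub_eq_zero.mp hzero
end
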